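/- For every sequence {q_n} of positive real numbers, the inequality p_{n+1}/p_n < (q_{n+1} + 1)/q_n holds for infinitely many values of n. -/

import Mathlib

/-- `p n` is the `n`-th prime number (1-indexed), as a real number. -/
noncomputable def p (n : ℕ) : ℝ := Nat.nth Nat.Prime (n - 1)

lemma nth_prime_pos (n : ℕ) : (0 : ℝ) < Nat.nth Nat.Prime n := by
  exact_mod_cast (Nat.prime_nth_prime n).pos

lemma not_summable_nth_prime :
    ¬ Summable (fun k : ℕ => (1 : ℝ) / Nat.nth Nat.Prime k) := by
  intro h
  apply Nat.Primes.not_summable_one_div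
  let e : ℕ ≃ Nat.Primes :=
    { toFun := fun k => ⟨Nat.nth Nat.Prime k, Nat.prime_nth_prime k⟩
      invFun := fun pr => Nat.count Nat.Prime pr
      left_inv := fun k => Nat.count_nth_of_infinite Nat.infinite_setOf_prime k
      right_inv := fun pr => Subtype.ext (Nat.nth_count pr.2) }
  rw [← e.summable_iff]
  exact h.congr fun k => by simp [e]; rfl

theorem ratio_inequality (q : ℕ → ℝ) (hq : ∀ n, 0 < q n) :
    {n : ℕ | p (n + 1) / p n < (q (n + 1) + 1) / q n}.Infinite := by
  by_contra hfin
  rw [Set.not_infinite] at hfin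
  obtain ⟨N, hN⟩ := hfin.bddAbove
  -- for all n > N, the inequality fails
  have hkey : ∀ n, N < n → (q (n + 1) + 1) / q n ≤ p (n + 1) / p n := by
    intro n hn
    by_contra h
    push_neg at h
    exact absurd (hN h) (not_le.mpr hn)
  have hp : ∀ n, 0 < p n := fun n => nth_prime_pos _
  -- s n := q n / p n
  set s : ℕ → ℝ := fun n => q n / p n with hs
  have hstep : ∀ n, N < n → s (n + 1) + 1 / p (n + 1) ≤ s n := by
    intro n hn
    have h1 := hkey n hn
    rw [div_le_div_iff₀ (hq n) (hp n)] at h1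
    have : (q (n + 1) + 1) / p (n + 1) ≤ q n / p n := by
      rw [div_le_div_iff₀ (hp (n + 1)) (hp n)]
      linarith
    calc s (n + 1) + 1 / p (n + 1) = (q (n + 1) + 1) / p (n + 1) := by
          simp [hs]; ring
      _ ≤ s n := this
  have hsum : ∀ m, s (N + 1 + m) + ∑ k ∈ Finset.range m, 1 / p (N + 1 + k + 1) ≤ s (N + 1) := by
    intro m
    induction m with
    | zero => simp
    | succ m ih =>
      have h1 := hstep (N + 1 + m) (by omega)
      rw [Finset.sum_range_succ]
      have : N + 1 + (m + 1) = N + 1 + m + 1 := by ring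
      rw [this]
      linarith
  have hb : ∀ m, ∑ k ∈ Finset.range m, 1 / p (N + 1 + k + 1) ≤ s (N + 1) := by
    intro m
    have hpos : 0 < s (N + 1 + m) := div_pos (hq _) (hp _)
    linarith [hsum m]
  have hsummable : Summable (fun k : ℕ => (1 : ℝ) / p (N + 1 + k + 1)) :=
    summable_of_sum_range_le (fun k => le_of_lt (by exact div_pos one_pos (hp _))) hb
  apply not_summable_nth_prime
  have heq : (fun k : ℕ => (1 : ℝ) / p (N + 1 + k + 1)) =
      fun k : ℕ => (1 : ℝ) / Nat.nth Nat.Prime (k + (N + 1)) := by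
    funext k
    have : N + 1 + k + 1 - 1 = k + (N + 1) := by omega
    simp only [p, this]
  rw [heq] at hsummable
  exact (summable_nat_add_iff (N + 1)).mp hsummable
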